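/- Let Λ ⊆ ℝ^n be a lattice and Φ an injective linear endomorphism of ℝ^n with Φ(Λ) ⊆ Λ, and let D be a digit set for (Λ, Φ, w) as in a pre-w-NADS. If D is a w-NADS, i.e., every element of Λ admits a D-w-NAF, then Φ is expanding: every complex eigenvalue λ of Φ satisfies |λ| > 1. -/

import Mathlib

set_option maxHeartbeats 1000000
set_option linter.unusedSectionVars false
set_option linter.unusedTactic false

open IntermediateField

open Polynomial Matrix



-- geometric sum bound
lemma aux_geom {r : ℝ} (h0 : 0 ≤ r) (h1 : r < 1) (ℓ : ℕ) :
    ∑ i ∈ Finset.range ℓ, r ^ i ≤ 1 / (1 - r) := by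
  have hpos : 0 < 1 - r := by linarith
  rw [le_div_iff₀ hpos]
  have := geom_sum_mul r ℓ
  have hr : (∑ i ∈ Finset.range ℓ, r ^ i) * (1 - r) = 1 - r ^ ℓ := by
    have : (∑ i ∈ Finset.range ℓ, r ^ i) * (r - 1) = r ^ ℓ - 1 := geom_sum_mul r ℓ
    nlinarith [this]
  rw [hr]
  have : 0 ≤ r ^ ℓ := pow_nonneg h0 ℓ
  linarith

-- root of charpoly gives singular `μ • 1 - M`
lemma aux_det_zero {n : ℕ} (M : Matrix (Fin n) (Fin n) ℂ) (μ : ℂ)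
    (h : M.charpoly.IsRoot μ) : (μ • (1 : Matrix (Fin n) (Fin n) ℂ) - M).det = 0 := by
  have h1 : Polynomial.eval μ M.charpoly = 0 := h
  have h2 : Polynomial.eval μ M.charpoly
      = ((charmatrix M).map (Polynomial.eval μ)).det := by
    rw [Matrix.charpoly]
    exact RingHom.map_det (Polynomial.evalRingHom μ) (charmatrix M)
  have h3 : (charmatrix M).map (Polynomial.eval μ) = μ • 1 - M := by
    ext i j
    by_cases hij : i = j
    · subst hij
      simp [charmatrix_apply, Matrix.one_apply, Matrix.smul_apply]
    · simp [charmatrix_apply, Matrix.one_apply, hij, Matrix.diagonal_apply_ne _ hij]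
  rw [h2, h3] at h1
  exact h1


lemma aux_basic {E : Type*} [NormedAddCommGroup E] [NormedSpace ℝ E] [FiniteDimensional ℝ E]
    {n : ℕ} (b : Module.Basis (Fin n) ℝ E)
    (Λ : Set E) (hΛ : Λ = ↑(Submodule.span ℤ (Set.range ⇑b)))
    (Φ : E →ₗ[ℝ] E) (hΦΛ : ∀ x ∈ Λ, Φ x ∈ Λ) :
    ∃ A : Matrix (Fin n) (Fin n) ℤ,
      (∀ x : E, ⇑(b.repr (Φ x)) = (A.map (fun k : ℤ => (k : ℝ))) *ᵥ ⇑(b.repr x)) ∧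
      Polynomial.map (algebraMap ℝ ℂ) (LinearMap.charpoly Φ)
        = (A.charpoly).map (Int.castRingHom ℂ) := by
  classical
  set M : Matrix (Fin n) (Fin n) ℝ := LinearMap.toMatrix b b Φ with hM
  have hbmem : ∀ i, b i ∈ Λ := by
    intro i; rw [hΛ]; exact Submodule.subset_span ⟨i, rfl⟩
  have hcoord : ∀ x ∈ Λ, ∀ i, ∃ k : ℤ, (k : ℝ) = b.repr x i := by
    intro x hx i
    rw [hΛ] at hx
    exact (b.mem_span_iff_repr_mem ℤ x).mp hx i
  have hAex : ∀ i j, ∃ k : ℤ, (k : ℝ) = M i j := by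
    intro i j
    have : M i j = b.repr (Φ (b j)) i := LinearMap.toMatrix_apply b b Φ i j
    rw [this]
    exact hcoord _ (hΦΛ _ (hbmem j)) i
  refine ⟨Matrix.of (fun i j => (hAex i j).choose), ?_, ?_⟩
  · have hMA : M = (Matrix.of (fun i j => (hAex i j).choose)).map (fun k : ℤ => (k : ℝ)) := by
      ext i j
      exact ((hAex i j).choose_spec).symm
    intro x
    rw [← hMA, hM]
    exact (LinearMap.toMatrix_mulVec_repr b b Φ x).symm
  · have hMA : M = (Matrix.of (fun i j => (hAex i j).choose)).map ⇑(Int.castRingHom ℝ) := by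
      ext i j
      exact ((hAex i j).choose_spec).symm
    have h1 : M.charpoly = ((Matrix.of (fun i j => (hAex i j).choose)).map ⇑(Int.castRingHom ℝ)).charpoly := by
      rw [← hMA]
    rw [← LinearMap.charpoly_toMatrix Φ b, ← hM, h1, Matrix.charpoly_map,
      Polynomial.map_map]
    congr 1


section
variable {E : Type*} [NormedAddCommGroup E] [NormedSpace ℝ E] [FiniteDimensional ℝ E]
  {n : ℕ}

-- cast of integer matrix-vector product
lemma aux_castVec (B : Matrix (Fin n) (Fin n) ℤ) (u : Fin n → ℤ) :
    (B.map (fun z : ℤ => (z : ℝ))) *ᵥ (fun i => (u i : ℝ)) = fun i => ((B *ᵥ u) i : ℝ) := by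
  funext i
  simp only [Matrix.mulVec, dotProduct, Matrix.map_apply]
  push_cast
  rfl

lemma aux_mk (b : Module.Basis (Fin n) ℝ E) (Λ : Set E)
    (hΛ : Λ = ↑(Submodule.span ℤ (Set.range ⇑b))) (u : Fin n → ℤ) :
    (b.equivFun.symm (fun i => (u i : ℝ))) ∈ Λ ∧
      ⇑(b.repr (b.equivFun.symm (fun i => (u i : ℝ)))) = fun i => (u i : ℝ) := by
  have hco : ⇑(b.repr (b.equivFun.symm (fun i => (u i : ℝ)))) = fun i => (u i : ℝ) := by
    funext i
    rw [← Module.Basis.equivFun_apply, LinearEquiv.apply_symm_apply]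
  refine ⟨?_, hco⟩
  rw [hΛ]
  refine (b.mem_span_iff_repr_mem ℤ _).mpr ?_
  intro i
  exact ⟨u i, by rw [congrFun hco i]; rfl⟩

lemma aux_coord (b : Module.Basis (Fin n) ℝ E) (Λ : Set E)
    (hΛ : Λ = ↑(Submodule.span ℤ (Set.range ⇑b))) {x : E} (hx : x ∈ Λ) (i : Fin n) :
    ∃ k : ℤ, (k : ℝ) = b.repr x i := by
  rw [hΛ] at hx
  exact (b.mem_span_iff_repr_mem ℤ x).mp hx i

lemma aux_repr_pow (b : Module.Basis (Fin n) ℝ E) (Φ : E →ₗ[ℝ] E)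
    (A : Matrix (Fin n) (Fin n) ℤ)
    (hrep : ∀ x : E, ⇑(b.repr (Φ x)) = (A.map (fun k : ℤ => (k : ℝ))) *ᵥ ⇑(b.repr x)) :
    ∀ (k : ℕ) (x : E),
      ⇑(b.repr ((Φ ^ k) x)) = ((A ^ k).map (fun z : ℤ => (z : ℝ))) *ᵥ ⇑(b.repr x) := by
  have hcast : ∀ B : Matrix (Fin n) (Fin n) ℤ, B.map (fun z : ℤ => (z : ℝ))
      = (Int.castRingHom ℝ).mapMatrix B := fun B => rfl
  intro k
  induction k with
  | zero =>
      intro x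
      have h1 : (A ^ 0).map (fun z : ℤ => (z : ℝ)) = 1 := by
        rw [pow_zero, hcast, _root_.map_one]
      rw [h1, Matrix.one_mulVec]
      rfl
  | succ k ih =>
      intro x
      have h1 : (Φ ^ (k+1)) x = Φ ((Φ ^ k) x) := by rw [pow_succ']; rfl
      rw [h1, hrep, ih, Matrix.mulVec_mulVec]
      congr 1
      rw [hcast, hcast, hcast, ← _root_.map_mul, ← pow_succ']

end


set_option maxHeartbeats 1000000 in
lemma aux_no_small_root
    {E : Type*} [NormedAddCommGroup E] [NormedSpace ℝ E] [FiniteDimensional ℝ E]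
    {n : ℕ} (b : Module.Basis (Fin n) ℝ E)
    (Λ : Set E) (hΛ : Λ = ↑(Submodule.span ℤ (Set.range ⇑b)))
    (Φ : E →ₗ[ℝ] E) (hΦinj : Function.Injective Φ)
    (hΦΛ : ∀ x ∈ Λ, Φ x ∈ Λ)
    (w : ℕ) (hw : 1 ≤ w)
    (Dbul : Set E) (hDΛ : Dbul ⊆ Λ)
    (hDnot : ∀ δ ∈ Dbul, δ ∉ ⇑Φ '' Λ)
    (hDrep : ∀ α ∈ Λ, α ∉ ⇑Φ '' Λ →
      ∃! δ, δ ∈ Dbul ∧ α - δ ∈ ⇑(Φ ^ w) '' Λ)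
    (hNADS : ∀ α ∈ Λ, ∃ (ℓ : ℕ) (η : Fin ℓ → E),
      (∀ j, η j ∈ insert (0 : E) Dbul) ∧
      (∀ i j : Fin ℓ, (i : ℕ) < (j : ℕ) → (j : ℕ) < (i : ℕ) + w → η i ≠ 0 → η j = 0) ∧
      (∑ j : Fin ℓ, (Φ ^ (j : ℕ)) (η j)) = α) :
    ∀ μ : ℂ, (Polynomial.map (algebraMap ℝ ℂ) (LinearMap.charpoly Φ)).IsRoot μ →
      1 ≤ ‖μ‖ := by
  classical
  obtain ⟨A, hrep, hchar⟩ := aux_basic b Λ hΛ Φ hΦΛ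
  intro μ hroot
  by_contra hcon
  push_neg at hcon
  have h0Λ : (0 : E) ∈ Λ := by
    rw [hΛ]; exact Submodule.zero_mem _
  -- eigenvector of the transpose
  have hrootC : ((A.map (fun k : ℤ => (k : ℂ))).charpoly).IsRoot μ := by
    have h1 : (A.map (fun k : ℤ => (k : ℂ))).charpoly
        = (A.charpoly).map (Int.castRingHom ℂ) := by
      have h2 : A.map (fun k : ℤ => (k : ℂ)) = A.map ⇑(Int.castRingHom ℂ) := rfl
      rw [h2, Matrix.charpoly_map]
    rw [Polynomial.IsRoot, h1]
    rw [Polynomial.IsRoot, hchar] at hroot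
    exact hroot
  have hdet2 : (μ • (1 : Matrix (Fin n) (Fin n) ℂ) - (A.map (fun k : ℤ => (k : ℂ)))ᵀ).det = 0 := by
    have h1 := aux_det_zero _ μ hrootC
    have h2 : μ • (1 : Matrix (Fin n) (Fin n) ℂ) - (A.map (fun k : ℤ => (k : ℂ)))ᵀ
        = (μ • (1 : Matrix (Fin n) (Fin n) ℂ) - A.map (fun k : ℤ => (k : ℂ)))ᵀ := by
      rw [Matrix.transpose_sub, Matrix.transpose_smul, Matrix.transpose_one]
    rw [h2, Matrix.det_transpose]
    exact h1
  obtain ⟨v, hv0, hvker⟩ := Matrix.exists_mulVec_eq_zero_iff.mpr hdet2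
  have hMv : (A.map (fun k : ℤ => (k : ℂ)))ᵀ *ᵥ v = μ • v := by
    rw [Matrix.sub_mulVec, Matrix.smul_mulVec, Matrix.one_mulVec, sub_eq_zero] at hvker
    exact hvker.symm
  -- the eigen-functional
  set f : E → ℂ := fun x => ∑ i, v i * ((b.repr x i : ℝ) : ℂ) with hf
  have hfadd : ∀ x y : E, f (x + y) = f x + f y := by
    intro x y
    simp only [hf, map_add, Finsupp.coe_add, Pi.add_apply]
    rw [← Finset.sum_add_distrib]
    refine Finset.sum_congr rfl ?_
    intro i _
    push_cast
    ring
  set F : E →+ ℂ := AddMonoidHom.mk' f hfadd with hFdef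
  have hf0 : f 0 = 0 := F.map_zero
  have hfΦ : ∀ x : E, f (Φ x) = μ * f x := by
    intro x
    have h1 : ∀ i, ((b.repr (Φ x) i : ℝ) : ℂ) = ∑ j, (A i j : ℂ) * ((b.repr x j : ℝ) : ℂ) := by
      intro i
      rw [congrFun (hrep x) i]
      simp only [Matrix.mulVec, dotProduct, Matrix.map_apply]
      push_cast
      rfl
    calc f (Φ x) = ∑ i, v i * ((b.repr (Φ x) i : ℝ) : ℂ) := rfl
      _ = ∑ i, ∑ j, v i * ((A i j : ℂ) * ((b.repr x j : ℝ) : ℂ)) := by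
          refine Finset.sum_congr rfl ?_
          intro i _
          rw [h1 i, Finset.mul_sum]
      _ = ∑ j, ∑ i, v i * ((A i j : ℂ) * ((b.repr x j : ℝ) : ℂ)) := Finset.sum_comm
      _ = ∑ j, ((A.map (fun k : ℤ => (k : ℂ)))ᵀ *ᵥ v) j * ((b.repr x j : ℝ) : ℂ) := by
          refine Finset.sum_congr rfl ?_
          intro j _
          simp only [Matrix.mulVec, dotProduct, Matrix.transpose_apply, Matrix.map_apply]
          rw [Finset.sum_mul]
          refine Finset.sum_congr rfl ?_
          intro i _
          ring
      _ = ∑ j, (μ * v j) * ((b.repr x j : ℝ) : ℂ) := by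
          refine Finset.sum_congr rfl ?_
          intro j _
          rw [hMv]
          simp [Pi.smul_apply, smul_eq_mul]
      _ = μ * f x := by
          rw [hf, Finset.mul_sum]
          refine Finset.sum_congr rfl ?_
          intro j _
          ring
  have hfpow : ∀ (k : ℕ) (x : E), f ((Φ ^ k) x) = μ ^ k * f x := by
    intro k
    induction k with
    | zero => intro x; simp
    | succ k ih =>
        intro x
        have h1 : (Φ ^ (k+1)) x = Φ ((Φ ^ k) x) := by rw [pow_succ']; rfl
        rw [h1, hfΦ, ih, pow_succ]
        ring
  -- finiteness of the digit set
  have hdet0 : A.det ≠ 0 := by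
    intro hdet
    obtain ⟨u, hu0, huk⟩ := Matrix.exists_mulVec_eq_zero_iff.mpr hdet
    obtain ⟨hzΛ, hzco⟩ := aux_mk b Λ hΛ u
    set x := b.equivFun.symm (fun i => (u i : ℝ)) with hx
    have h1 : ⇑(b.repr (Φ x)) = 0 := by
      rw [hrep x, hzco, aux_castVec, huk]
      funext i
      simp
    have h2 : Φ x = 0 := by
      apply b.equivFun.injective
      rw [map_zero]
      funext i
      rw [Module.Basis.equivFun_apply, congrFun h1 i]
    have h3 : x = 0 := hΦinj (by rw [h2, map_zero])
    apply hu0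
    funext i
    have := congrFun hzco i
    rw [h3] at this
    simp only [map_zero, Finsupp.coe_zero, Pi.zero_apply] at this
    exact_mod_cast this.symm
  set d : ℤ := A.det ^ w with hd
  have hd0 : d ≠ 0 := pow_ne_zero _ hdet0
  have hdsm : ∀ y ∈ Λ, d • y ∈ ⇑(Φ ^ w) '' Λ := by
    intro y hy
    choose c hc using fun i => aux_coord b Λ hΛ hy i
    obtain ⟨hzΛ, hzco⟩ := aux_mk b Λ hΛ ((A ^ w).adjugate *ᵥ c)
    set z := b.equivFun.symm (fun i => (((A ^ w).adjugate *ᵥ c) i : ℝ)) with hz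
    refine ⟨z, hzΛ, ?_⟩
    apply b.repr.injective
    apply DFunLike.coe_injective
    show ⇑(b.repr ((Φ ^ w) z)) = ⇑(b.repr (d • y))
    rw [aux_repr_pow b Φ A hrep w z, hzco, aux_castVec, Matrix.mulVec_mulVec,
      Matrix.mul_adjugate, Matrix.det_pow]
    have hyco : ⇑(b.repr (d • y)) = fun i => ((d * c i : ℤ) : ℝ) := by
      funext i
      have h1 : b.repr (d • y) = d • b.repr y := map_zsmul b.repr _ _
      rw [h1]
      simp only [Finsupp.coe_smul, Pi.smul_apply, zsmul_eq_mul]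
      rw [← hc i]
      push_cast
      ring
    rw [hyco]
    funext i
    rw [Matrix.smul_mulVec, Matrix.one_mulVec]
    show ((((A.det ^ w) • c) i : ℤ) : ℝ) = ((d * c i : ℤ) : ℝ)
    rw [Pi.smul_apply, smul_eq_mul, hd]
  haveI : NeZero d.natAbs := ⟨Int.natAbs_ne_zero.mpr hd0⟩
  have hDfin : Dbul.Finite := by
    set g : Dbul → (Fin n → ZMod d.natAbs) := fun δ =>
      fun i => (((aux_coord b Λ hΛ (hDΛ δ.2) i).choose : ℤ) : ZMod d.natAbs) with hg
    have hginj : Function.Injective g := by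
      intro δ₁ δ₂ heq
      set c₁ : Fin n → ℤ := fun i => (aux_coord b Λ hΛ (hDΛ δ₁.2) i).choose with hc₁
      set c₂ : Fin n → ℤ := fun i => (aux_coord b Λ hΛ (hDΛ δ₂.2) i).choose with hc₂
      have hs₁ : ∀ i, ((c₁ i : ℝ)) = b.repr (δ₁ : E) i := fun i =>
        (aux_coord b Λ hΛ (hDΛ δ₁.2) i).choose_spec
      have hs₂ : ∀ i, ((c₂ i : ℝ)) = b.repr (δ₂ : E) i := fun i =>
        (aux_coord b Λ hΛ (hDΛ δ₂.2) i).choose_spec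
      have hdvd : ∀ i, d ∣ (c₁ i - c₂ i) := by
        intro i
        have h1 : ((c₁ i : ZMod d.natAbs)) = (c₂ i : ZMod d.natAbs) := congrFun heq i
        rw [ZMod.intCast_eq_intCast_iff] at h1
        have h2 : (d.natAbs : ℤ) ∣ (c₁ i - c₂ i) := (Int.ModEq.dvd h1.symm)
        exact Int.natAbs_dvd.mp h2
      choose k hk using hdvd
      obtain ⟨hyΛ, hyco⟩ := aux_mk b Λ hΛ k
      set y := b.equivFun.symm (fun i => (k i : ℝ)) with hy
      have hdiff : (δ₁ : E) - δ₂ = d • y := by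
        apply b.repr.injective
        apply DFunLike.coe_injective
        show ⇑(b.repr ((δ₁ : E) - δ₂)) = ⇑(b.repr (d • y))
        funext i
        have h1 : b.repr ((δ₁ : E) - δ₂) = b.repr (δ₁ : E) - b.repr (δ₂ : E) := map_sub _ _ _
        have h2 : b.repr (d • y) = d • b.repr y := map_zsmul b.repr _ _
        rw [h1, h2]
        simp only [Finsupp.coe_sub, Pi.sub_apply, Finsupp.coe_smul, Pi.smul_apply, zsmul_eq_mul]
        rw [← hs₁ i, ← hs₂ i, congrFun hyco i]
        have h3 : ((c₁ i - c₂ i : ℤ) : ℝ) = ((d * k i : ℤ) : ℝ) :=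
          congrArg (fun z : ℤ => ((z : ℝ))) (hk i)
        push_cast at h3
        push_cast
        linarith [h3]
      have hmain : (δ₁ : E) = δ₂ := by
        have hu := hDrep (δ₁ : E) (hDΛ δ₁.2) (hDnot _ δ₁.2)
        refine hu.unique ?_ ?_
        · exact ⟨δ₁.2, by rw [sub_self]; exact ⟨0, h0Λ, map_zero _⟩⟩
        · exact ⟨δ₂.2, by rw [hdiff]; exact hdsm y hyΛ⟩
      exact Subtype.ext hmain
    have : Finite Dbul := Finite.of_injective g hginj
    exact Set.toFinite _
  -- bound on digits
  obtain ⟨C, hC⟩ := ((hDfin.insert 0).image (fun δ => ‖f δ‖)).bddAbove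
  have hCb : ∀ x ∈ insert (0 : E) Dbul, ‖f x‖ ≤ C := by
    intro x hx
    exact hC (Set.mem_image_of_mem _ hx)
  have hC0 : 0 ≤ C := by
    have := hCb 0 (Set.mem_insert _ _)
    rw [hf0] at this
    simpa using this
  -- choose a lattice point with large functional value
  obtain ⟨i0, hi0⟩ := Function.ne_iff.mp hv0
  have hvpos : 0 < ‖v i0‖ := by
    exact norm_pos_iff.mpr hi0
  have hfb : f (b i0) = v i0 := by
    simp only [hf]
    rw [Finset.sum_eq_single i0]
    · rw [Module.Basis.repr_self]
      simp
    · intro j _ hj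
      rw [Module.Basis.repr_self]
      rw [Finsupp.single_apply]
      simp [Ne.symm hj]
    · simp
  obtain ⟨m, hm⟩ := exists_nat_gt (C / (1 - ‖μ‖) / ‖v i0‖)
  set α : E := m • b i0 with hα
  have hαΛ : α ∈ Λ := by
    rw [hΛ, hα]
    have hb : b i0 ∈ Submodule.span ℤ (Set.range ⇑b) := Submodule.subset_span ⟨i0, rfl⟩
    have : (m : ℤ) • b i0 ∈ Submodule.span ℤ (Set.range ⇑b) := Submodule.smul_mem _ _ hb
    simpa using this
  obtain ⟨ℓ, η, hdig, hnaf, hsum⟩ := hNADS α hαΛ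
  have hfα1 : f α = (m : ℂ) * v i0 := by
    rw [hα]
    have : f (m • b i0) = m • f (b i0) := F.map_nsmul _ _
    rw [this, hfb, nsmul_eq_mul]
  have habs1 : ‖f α‖ = m * ‖v i0‖ := by
    rw [hfα1, norm_mul]
    simp
  have hfα2 : f α = ∑ j : Fin ℓ, μ ^ (j : ℕ) * f (η j) := by
    rw [← hsum]
    have : f (∑ j : Fin ℓ, (Φ ^ (j : ℕ)) (η j)) = ∑ j : Fin ℓ, f ((Φ ^ (j : ℕ)) (η j)) :=
      map_sum F _ _
    rw [this]
    exact Finset.sum_congr rfl (fun j _ => hfpow _ _)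
  have hbound : ‖f α‖ ≤ C / (1 - ‖μ‖) := by
    have h1 : ‖f α‖ ≤ ∑ j : Fin ℓ, ‖μ‖ ^ (j : ℕ) * C := by
      rw [hfα2]
      refine le_trans (norm_sum_le _ _) ?_
      refine Finset.sum_le_sum ?_
      intro j _
      rw [norm_mul, norm_pow]
      exact mul_le_mul_of_nonneg_left (hCb _ (hdig j)) (by positivity)
    have h2 : ∑ j : Fin ℓ, ‖μ‖ ^ (j : ℕ) * C
        = (∑ i ∈ Finset.range ℓ, ‖μ‖ ^ i) * C := by
      rw [Finset.sum_mul]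
      exact Fin.sum_univ_eq_sum_range (fun i => ‖μ‖ ^ i * C) ℓ
    have h3 : (∑ i ∈ Finset.range ℓ, ‖μ‖ ^ i) * C ≤ (1 / (1 - ‖μ‖)) * C :=
      mul_le_mul_of_nonneg_right (aux_geom (by positivity) hcon ℓ) hC0
    calc ‖f α‖ ≤ ∑ j : Fin ℓ, ‖μ‖ ^ (j : ℕ) * C := h1
      _ = (∑ i ∈ Finset.range ℓ, ‖μ‖ ^ i) * C := h2
      _ ≤ (1 / (1 - ‖μ‖)) * C := h3
      _ = C / (1 - ‖μ‖) := by ring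
  rw [habs1] at hbound
  have hlt : C / (1 - ‖μ‖) < m * ‖v i0‖ := by
    rw [div_lt_iff₀ hvpos] at hm
    exact hm
  linarith



lemma aux_claimC {E : Type*} [AddCommGroup E] [Module ℝ E]
    (Λ : Submodule ℤ E) (Φ : E →ₗ[ℝ] E) (hΦinj : Function.Injective Φ)
    (hΦΛ : ∀ x ∈ Λ, Φ x ∈ Λ)
    (w : ℕ) (hw : 1 ≤ w) (Dbul : Set E) (hDΛ : ∀ δ ∈ Dbul, δ ∈ Λ)
    (hDnot : ∀ δ ∈ Dbul, δ ∉ ⇑Φ '' (Λ : Set E)) :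
    ∀ (ℓ : ℕ) (η : Fin ℓ → E), (∀ j, η j ∈ insert (0:E) Dbul) →
    (∀ i j : Fin ℓ, (i:ℕ) < (j:ℕ) → (j:ℕ) < (i:ℕ) + w → η i ≠ 0 → η j = 0) →
    (∀ m : ℕ, (∑ j : Fin ℓ, (Φ ^ (j:ℕ)) (η j)) ∈ ⇑(Φ^m) '' (Λ : Set E)) →
    (∑ j : Fin ℓ, (Φ ^ (j:ℕ)) (η j)) = 0 := by
  -- powers preserve Λ
  have hpow : ∀ (k : ℕ) x, x ∈ Λ → (Φ ^ k) x ∈ Λ := by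
    intro k
    induction k with
    | zero => intro x hx; simpa using hx
    | succ k ih =>
        intro x hx
        have : (Φ ^ (k+1)) x = Φ ((Φ ^ k) x) := by
          rw [pow_succ']; rfl
        rw [this]; exact hΦΛ _ (ih x hx)
  have hdigΛ : ∀ x, x ∈ insert (0:E) Dbul → x ∈ Λ := by
    intro x hx
    rcases Set.mem_insert_iff.mp hx with h | h
    · simp [h]
    · exact hDΛ x h
  intro ℓ
  induction ℓ with
  | zero =>
      intro η _ _ _
      simp
  | succ ℓ ih =>
      intro η hdig hnaf hmem
      set α := ∑ j : Fin (ℓ+1), (Φ ^ (j:ℕ)) (η j) with hα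
      by_cases h0 : η 0 = 0
      · -- shift down
        set η' : Fin ℓ → E := fun j => η j.succ with hη'
        set β := ∑ j : Fin ℓ, (Φ ^ (j:ℕ)) (η' j) with hβ
        have hαβ : α = Φ β := by
          rw [hα, Fin.sum_univ_succ, h0]
          simp only [map_zero, zero_add, hβ, hη']
          rw [map_sum]
          refine Finset.sum_congr rfl ?_
          intro j _
          have : (Φ ^ ((j.succ : Fin (ℓ+1)) : ℕ)) (η j.succ) = (Φ ^ ((j:ℕ)+1)) (η j.succ) := by
            norm_num
          rw [this, pow_succ']
          rfl
        have hβmem : ∀ m : ℕ, β ∈ ⇑(Φ^m) '' (Λ : Set E) := by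
          intro m
          obtain ⟨γ, hγΛ, hγ⟩ := hmem (m+1)
          refine ⟨γ, hγΛ, ?_⟩
          apply hΦinj
          have h5 : (Φ ^ (m+1)) γ = Φ ((Φ ^ m) γ) := by rw [pow_succ']; rfl
          rw [← h5, hγ, hαβ]
        have hβ0 : β = 0 := by
          refine ih η' (fun j => hdig j.succ) ?_ hβmem
          intro i j hij hjw hi
          refine hnaf i.succ j.succ ?_ ?_ hi
          · simpa using hij
          · have h1 : ((i.succ : Fin (ℓ+1)) : ℕ) = (i:ℕ) + 1 := by norm_num
            have h2 : ((j.succ : Fin (ℓ+1)) : ℕ) = (j:ℕ) + 1 := by norm_num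
            omega
        rw [hαβ, hβ0, map_zero]
      · -- lowest digit nonzero: contradiction
        exfalso
        have hd : η 0 ∈ Dbul := by
          rcases Set.mem_insert_iff.mp (hdig 0) with h | h
          · exact absurd h h0
          · exact h
        have hzero : ∀ j : Fin (ℓ+1), 0 < (j:ℕ) → (j:ℕ) < w → η j = 0 := by
          intro j hj hjw
          exact hnaf 0 j (by simpa using hj) (by simpa using hjw) h0
        set γ := ∑ j : Fin (ℓ+1), (if w ≤ (j:ℕ) then (Φ ^ ((j:ℕ) - w)) (η j) else 0) with hγ
        have hγΛ : γ ∈ Λ := by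
          refine Submodule.sum_mem _ ?_
          intro j _
          by_cases hj : w ≤ (j:ℕ)
          · simp only [hj, if_true]
            exact hpow _ _ (hdigΛ _ (hdig j))
          · simp [hj]
        have hsplit : α = (Φ ^ w) γ + η 0 := by
          have hterm : ∀ j : Fin (ℓ+1), (Φ ^ (j:ℕ)) (η j)
              = (if w ≤ (j:ℕ) then (Φ ^ (j:ℕ)) (η j) else 0)
                + (if (j:ℕ) = 0 then η 0 else 0) := by
            intro j
            by_cases hj : w ≤ (j:ℕ)
            · have hj0 : ¬ (j:ℕ) = 0 := by omega
              simp [hj, hj0]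
            · by_cases hj0 : (j:ℕ) = 0
              · have hj' : j = 0 := Fin.ext (by simpa using hj0)
                subst hj'
                have hw0 : ¬ w ≤ ((0 : Fin (ℓ+1)) : ℕ) := by simpa using hj
                rw [if_neg hw0, if_pos hj0]
                simp
              · have : η j = 0 := hzero j (Nat.pos_of_ne_zero hj0) (by omega)
                simp [hj, hj0, this]
          have h1 : α = (∑ j : Fin (ℓ+1), (if w ≤ (j:ℕ) then (Φ ^ (j:ℕ)) (η j) else 0))
              + (∑ j : Fin (ℓ+1), (if (j:ℕ) = 0 then η 0 else 0)) := by
            rw [hα, ← Finset.sum_add_distrib]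
            exact Finset.sum_congr rfl (fun j _ => hterm j)
          have h2 : (∑ j : Fin (ℓ+1), (if (j:ℕ) = 0 then η 0 else 0)) = η 0 := by
            rw [Finset.sum_eq_single (0 : Fin (ℓ+1))]
            · simp
            · intro j _ hj
              have : ¬ (j:ℕ) = 0 := by
                intro h; exact hj (Fin.ext (by simpa using h))
              simp [this]
            · simp
          have h3 : (Φ ^ w) γ = ∑ j : Fin (ℓ+1), (if w ≤ (j:ℕ) then (Φ ^ (j:ℕ)) (η j) else 0) := by
            rw [hγ, map_sum]
            refine Finset.sum_congr rfl ?_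
            intro j _
            by_cases hj : w ≤ (j:ℕ)
            · simp only [hj, if_true]
              have : (Φ ^ w) ((Φ ^ ((j:ℕ) - w)) (η j)) = (Φ ^ (w + ((j:ℕ) - w))) (η j) := by
                rw [pow_add]; rfl
              rw [this, Nat.add_sub_cancel' hj]
            · simp [hj]
          rw [h1, h2, h3]
        obtain ⟨ρ, hρΛ, hρ⟩ := hmem 1
        obtain ⟨w', rfl⟩ : ∃ w', w = w' + 1 := ⟨w - 1, by omega⟩
        refine hDnot (η 0) hd ⟨ρ - (Φ ^ w') γ, Submodule.sub_mem _ hρΛ (hpow w' γ hγΛ), ?_⟩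
        have hρ' : Φ ρ = α := by
          rw [← hρ]; simp [pow_one]
        have hww : (Φ ^ (w' + 1)) γ = Φ ((Φ ^ w') γ) := by rw [pow_succ']; rfl
        rw [map_sub, hρ', hsplit, hww]
        abel



/-- If a digit set `D` attached to a pre-`w`-NADS on a full-rank lattice `Λ`
in `ℝ^n` is a `w`-NADS, then the base endomorphism `Φ` is expanding: every
complex eigenvalue has absolute value `> 1`. -/
theorem wnads_implies_expanding
    {E : Type*} [NormedAddCommGroup E] [NormedSpace ℝ E] [FiniteDimensional ℝ E]
    {n : ℕ} (b : Module.Basis (Fin n) ℝ E)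
    (Λ : Set E) (hΛ : Λ = ↑(Submodule.span ℤ (Set.range ⇑b)))
    (Φ : E →ₗ[ℝ] E) (hΦinj : Function.Injective Φ)
    (hΦΛ : ∀ x ∈ Λ, Φ x ∈ Λ)
    (w : ℕ) (hw : 1 ≤ w)
    (Dbul : Set E) (hDΛ : Dbul ⊆ Λ)
    (hDnot : ∀ δ ∈ Dbul, δ ∉ ⇑Φ '' Λ)
    (hDrep : ∀ α ∈ Λ, α ∉ ⇑Φ '' Λ →
      ∃! δ, δ ∈ Dbul ∧ α - δ ∈ ⇑(Φ ^ w) '' Λ)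
    (hNADS : ∀ α ∈ Λ, ∃ (ℓ : ℕ) (η : Fin ℓ → E),
      (∀ j, η j ∈ insert (0 : E) Dbul) ∧
      (∀ i j : Fin ℓ, (i : ℕ) < (j : ℕ) → (j : ℕ) < (i : ℕ) + w → η i ≠ 0 → η j = 0) ∧
      (∑ j : Fin ℓ, (Φ ^ (j : ℕ)) (η j)) = α) :
    ∀ lam : ℂ, (Polynomial.map (algebraMap ℝ ℂ) (LinearMap.charpoly Φ)).IsRoot lam →
      1 < ‖lam‖ := by
  classical
  intro lam hlam
  by_contra hcon
  push_neg at hcon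
  have hbig := aux_no_small_root b Λ hΛ Φ hΦinj hΦΛ w hw Dbul hDΛ hDnot hDrep hNADS
  have habs : ‖lam‖ = 1 := le_antisymm hcon (hbig lam hlam)
  have hlam0 : lam ≠ 0 := by
    intro h; rw [h] at habs; simp at habs
  obtain ⟨A, hrep, hchar⟩ := aux_basic b Λ hΛ Φ hΦΛ
  have hrootA : Polynomial.eval lam ((A.charpoly).map (Int.castRingHom ℂ)) = 0 := by
    rw [← hchar]; exact hlam
  have hint : IsIntegral ℤ lam := by
    refine ⟨A.charpoly, A.charpoly_monic, ?_⟩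
    show Polynomial.eval₂ (algebraMap ℤ ℂ) lam A.charpoly = 0
    rw [Polynomial.eval₂_eq_eval_map,
      Subsingleton.elim (algebraMap ℤ ℂ) (Int.castRingHom ℂ)]
    exact hrootA
  have hintQ : IsIntegral ℚ lam := hint.tower_top
  set q := minpoly ℚ lam with hq
  have hcomp : (algebraMap ℚ ℂ).comp (Int.castRingHom ℚ) = Int.castRingHom ℂ :=
    Subsingleton.elim _ _
  -- every conjugate of `lam` has modulus at least 1
  have hconj : ∀ μ : ℂ, (Polynomial.aeval μ) q = 0 → 1 ≤ ‖μ‖ := by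
    intro μ hμ
    have hdvd : q ∣ (A.charpoly).map (Int.castRingHom ℚ) := by
      apply minpoly.dvd
      rw [Polynomial.aeval_def, Polynomial.eval₂_eq_eval_map, Polynomial.map_map, hcomp]
      exact hrootA
    obtain ⟨r, hr⟩ := hdvd
    apply hbig
    rw [Polynomial.IsRoot, hchar]
    have h1 : (A.charpoly).map (Int.castRingHom ℂ)
        = ((A.charpoly).map (Int.castRingHom ℚ)).map (algebraMap ℚ ℂ) := by
      rw [Polynomial.map_map, hcomp]
    rw [h1, hr, Polynomial.map_mul, Polynomial.eval_mul]
    have hq0 : Polynomial.eval μ (q.map (algebraMap ℚ ℂ)) = 0 := by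
      rw [← Polynomial.eval₂_eq_eval_map, ← Polynomial.aeval_def]; exact hμ
    rw [hq0, zero_mul]
  -- `lam⁻¹` is also a root of `q`
  have hconjroot : (Polynomial.aeval (lam⁻¹ : ℂ)) q = 0 := by
    have h2 : lam * (starRingEnd ℂ) lam = 1 := by
      rw [Complex.mul_conj]
      rw [Complex.normSq_eq_norm_sq, habs]
      norm_num
    have h1 : (starRingEnd ℂ) lam = lam⁻¹ := eq_inv_of_mul_eq_one_right h2
    rw [← h1]
    have h3 : (Polynomial.aeval ((starRingEnd ℂ) lam)) q
        = (starRingEnd ℂ) ((Polynomial.aeval lam) q) := by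
      rw [Polynomial.aeval_def, Polynomial.aeval_def, Polynomial.hom_eval₂]
      congr 1
      exact Subsingleton.elim _ _
    rw [h3, minpoly.aeval, map_zero]
  -- the number field generated by lam
  have hfd : FiniteDimensional ℚ ℚ⟮lam⟯ := IntermediateField.adjoin.finiteDimensional hintQ
  haveI : NumberField ℚ⟮lam⟯ := { to_charZero := inferInstance, to_finiteDimensional := hfd }
  set x := IntermediateField.AdjoinSimple.gen ℚ lam with hx
  have hxmap : algebraMap ℚ⟮lam⟯ ℂ x = lam := IntermediateField.AdjoinSimple.algebraMap_gen ℚ lam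
  have hxint : IsIntegral ℤ x := by
    rw [← isIntegral_algebraMap_iff (algebraMap ℚ⟮lam⟯ ℂ).injective, hxmap]
    exact hint
  have hxmin : minpoly ℚ x = q := IntermediateField.minpoly_gen ℚ lam
  have hxinvmin : minpoly ℚ (x⁻¹) = q := by
    have h1 : algebraMap ℚ⟮lam⟯ ℂ (x⁻¹) = lam⁻¹ := by rw [map_inv₀, hxmap]
    rw [← minpoly.algebraMap_eq (algebraMap ℚ⟮lam⟯ ℂ).injective, h1]
    exact (minpoly.eq_of_irreducible_of_monic (minpoly.irreducible hintQ) hconjroot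
      (minpoly.monic hintQ)).symm
  have hnorm : ∀ φ : ℚ⟮lam⟯ →+* ℂ, ‖φ x‖ = 1 := by
    intro φ
    have hφalg : ∀ (y : ℚ⟮lam⟯) (p : Polynomial ℚ),
        Polynomial.aeval (φ y) p = φ (Polynomial.aeval y p) := by
      intro y p
      rw [Polynomial.aeval_def, Polynomial.aeval_def, Polynomial.hom_eval₂]
      congr 1
      exact Subsingleton.elim _ _
    have h1 : Polynomial.aeval (φ x) q = 0 := by
      rw [hφalg, ← hxmin, minpoly.aeval, map_zero]
    have hge : 1 ≤ ‖φ x‖ := hconj _ h1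
    have h2 : Polynomial.aeval (φ (x⁻¹)) q = 0 := by
      rw [hφalg, ← hxinvmin, minpoly.aeval, map_zero]
    have hge2 : 1 ≤ ‖(φ x)⁻¹‖ := by
      rw [← map_inv₀ φ]; exact hconj _ h2
    rw [norm_inv] at hge2
    have hpos : 0 < ‖φ x‖ := lt_of_lt_of_le one_pos hge
    have h6 : ‖φ x‖ * ‖φ x‖⁻¹ = 1 := mul_inv_cancel₀ (ne_of_gt hpos)
    have h7 := mul_le_mul_of_nonneg_left hge2 (le_of_lt hpos)
    rw [h6, mul_one] at h7
    linarith
  obtain ⟨N, hN0, hxN⟩ := NumberField.Embeddings.pow_eq_one_of_norm_eq_one ℚ⟮lam⟯ ℂ hxint hnorm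
  have hlamN : lam ^ N = 1 := by
    have h := congrArg (algebraMap ℚ⟮lam⟯ ℂ) hxN
    rw [map_pow, hxmap, _root_.map_one] at h
    exact h
  -- a nonzero lattice vector fixed by Φ^N
  have hdetz : ((A ^ N - 1 : Matrix (Fin n) (Fin n) ℤ)).det = 0 := by
    have hrootC : ((A.map (fun k : ℤ => (k : ℂ))).charpoly).IsRoot lam := by
      have h2 : A.map (fun k : ℤ => (k : ℂ)) = A.map ⇑(Int.castRingHom ℂ) := rfl
      rw [Polynomial.IsRoot, h2, Matrix.charpoly_map]
      exact hrootA
    have hdet1 := aux_det_zero _ lam hrootC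
    obtain ⟨u, hu0, huker⟩ := Matrix.exists_mulVec_eq_zero_iff.mpr hdet1
    have hMu : (A.map (fun k : ℤ => (k : ℂ))) *ᵥ u = lam • u := by
      rw [Matrix.sub_mulVec, Matrix.smul_mulVec, Matrix.one_mulVec, sub_eq_zero] at huker
      exact huker.symm
    have hMuk : ∀ k : ℕ, ((A.map (fun k : ℤ => (k : ℂ))) ^ k) *ᵥ u = lam ^ k • u := by
      intro k
      induction k with
      | zero => simp [Matrix.one_mulVec]
      | succ k ih =>
          have h1 : (A.map (fun k : ℤ => (k : ℂ))) ^ (k+1)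
              = (A.map (fun k : ℤ => (k : ℂ))) * (A.map (fun k : ℤ => (k : ℂ))) ^ k :=
            pow_succ' _ _
          rw [h1, ← Matrix.mulVec_mulVec, ih, Matrix.mulVec_smul, hMu, smul_smul, ← pow_succ]
    have hker : ((A.map (fun k : ℤ => (k : ℂ))) ^ N - 1) *ᵥ u = 0 := by
      rw [Matrix.sub_mulVec, Matrix.one_mulVec, hMuk N, hlamN, one_smul, sub_self]
    have hdetC : ((A.map (fun k : ℤ => (k : ℂ))) ^ N - 1).det = 0 :=
      Matrix.exists_mulVec_eq_zero_iff.mp ⟨u, hu0, hker⟩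
    have hmap : ((A ^ N - 1 : Matrix (Fin n) (Fin n) ℤ)).map (fun k : ℤ => (k : ℂ))
        = (A.map (fun k : ℤ => (k : ℂ))) ^ N - 1 := by
      show (Int.castRingHom ℂ).mapMatrix (A ^ N - 1)
        = ((Int.castRingHom ℂ).mapMatrix A) ^ N - 1
      rw [map_sub, map_pow, _root_.map_one]
    have h4 := RingHom.map_det (Int.castRingHom ℂ) (A ^ N - 1)
    have h5 : (((A ^ N - 1 : Matrix (Fin n) (Fin n) ℤ)).det : ℂ) = 0 := by
      rw [show ((((A ^ N - 1 : Matrix (Fin n) (Fin n) ℤ)).det : ℂ))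
          = (Int.castRingHom ℂ) ((A ^ N - 1 : Matrix (Fin n) (Fin n) ℤ)).det from rfl, h4]
      show ((A ^ N - 1 : Matrix (Fin n) (Fin n) ℤ).map ⇑(Int.castRingHom ℂ)).det = 0
      rw [show (A ^ N - 1 : Matrix (Fin n) (Fin n) ℤ).map ⇑(Int.castRingHom ℂ)
          = (A ^ N - 1 : Matrix (Fin n) (Fin n) ℤ).map (fun k : ℤ => (k : ℂ)) from rfl, hmap]
      exact hdetC
    exact_mod_cast h5
  obtain ⟨c, hc0, hck⟩ := Matrix.exists_mulVec_eq_zero_iff.mpr hdetz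
  have hfix : (A ^ N) *ᵥ c = c := by
    rw [Matrix.sub_mulVec, Matrix.one_mulVec, sub_eq_zero] at hck
    exact hck
  obtain ⟨hzΛ, hzco⟩ := aux_mk b Λ hΛ c
  set z := b.equivFun.symm (fun i => (c i : ℝ)) with hzdef
  have hz0 : z ≠ 0 := by
    intro h
    apply hc0
    funext i
    have h1 := congrFun hzco i
    rw [h] at h1
    simp only [map_zero, Finsupp.coe_zero, Pi.zero_apply] at h1
    simp only [Pi.zero_apply]
    exact_mod_cast h1.symm
  have hzfix : (Φ ^ N) z = z := by
    apply b.repr.injective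
    apply DFunLike.coe_injective
    show ⇑(b.repr ((Φ ^ N) z)) = ⇑(b.repr z)
    rw [aux_repr_pow b Φ A hrep N z, hzco, aux_castVec, hfix]
  have hΛpow : ∀ (k : ℕ), ∀ x ∈ Λ, (Φ ^ k) x ∈ Λ := by
    intro k
    induction k with
    | zero => intro x hx; simpa using hx
    | succ k ih =>
        intro x hx
        have h1 : (Φ ^ (k+1)) x = Φ ((Φ ^ k) x) := by rw [pow_succ']; rfl
        rw [h1]; exact hΦΛ _ (ih x hx)
  have hziter : ∀ t : ℕ, (Φ ^ (N * t)) z = z := by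
    intro t
    induction t with
    | zero => simp
    | succ t ih =>
        have h1 : N * (t+1) = N * t + N := by ring
        have h2 : (Φ ^ (N * t + N)) z = (Φ ^ (N * t)) ((Φ ^ N) z) := by
          rw [pow_add]; rfl
        rw [h1, h2, hzfix, ih]
  have hzm : ∀ m : ℕ, z ∈ ⇑(Φ ^ m) '' Λ := by
    intro m
    have hNm : m ≤ N * m := Nat.le_mul_of_pos_left m hN0
    refine ⟨(Φ ^ (N * m - m)) z, hΛpow _ _ hzΛ, ?_⟩
    have h1 : m + (N * m - m) = N * m := by omega
    have h2 : (Φ ^ m) ((Φ ^ (N * m - m)) z) = (Φ ^ (m + (N * m - m))) z := by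
      rw [pow_add]; rfl
    rw [h2, h1, hziter m]
  -- conclude with the rigidity of NAFs
  obtain ⟨ℓ, η, hdig, hnaf, hsum⟩ := hNADS z hzΛ
  have hfinal := aux_claimC (Submodule.span ℤ (Set.range ⇑b)) Φ hΦinj
    (fun x hx => by
      have h1 := hΦΛ x (by rw [hΛ]; exact hx)
      rwa [hΛ] at h1)
    w hw Dbul
    (fun δ hδ => by
      have := hDΛ hδ
      rwa [hΛ] at this)
    (fun δ hδ => by
      have := hDnot δ hδ
      rwa [hΛ] at this)
    ℓ η hdig hnaf
    (fun m => by
      rw [hsum]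
      have := hzm m
      rwa [hΛ] at this)
  rw [hsum] at hfinal
  exact hz0 hfinal
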